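/- Let B_1 be an invertible symmetric n×n rational matrix and B_2 an invertible symmetric m×m rational matrix. Form the (n+m+2)×(n+m+2) symmetric matrix B_∘ with block structure corresponding to the splitting move: B_∘ has a vertex of weight e connected to a vertex of weight 0 and to the first basis vectors of the B_1 and B_2 blocks. Then the number of positive eigenvalues satisfies π(B_∘) = 1 + π(B_1) + π(B_2), the signature satisfies σ(B_∘) = σ(B_1) + σ(B_2), and tr(B_∘) = e + tr(B_1) + tr(B_2). -/

import Mathlib

open Finset

/-- Index type for the splitting-move matrix: the basis is ordered as
`(v₀, v_e, basis of the B₁ block, basis of the B₂ block)`. -/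
abbrev SplitIdx (n m : ℕ) := (Unit ⊕ Unit) ⊕ (Fin (n + 1) ⊕ Fin (m + 1))

/-- The symmetric matrix `B_∘` of the splitting move: a vertex `v_e` of weight `e`
connected to a vertex `v₀` of weight `0` and to the first basis vectors of the
`B₁` and `B₂` blocks; the blocks `B₁`, `B₂` are embedded unchanged and all other
entries vanish. -/
def splitMat {n m : ℕ} (e : ℝ) (B1 : Matrix (Fin (n + 1)) (Fin (n + 1)) ℝ)
    (B2 : Matrix (Fin (m + 1)) (Fin (m + 1)) ℝ) :
    Matrix (SplitIdx n m) (SplitIdx n m) ℝ :=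
  fun i j =>
    match i, j with
    | Sum.inl (Sum.inl _), Sum.inl (Sum.inl _) => 0
    | Sum.inl (Sum.inl _), Sum.inl (Sum.inr _) => 1
    | Sum.inl (Sum.inr _), Sum.inl (Sum.inl _) => 1
    | Sum.inl (Sum.inr _), Sum.inl (Sum.inr _) => e
    | Sum.inl (Sum.inl _), Sum.inr _ => 0
    | Sum.inr _, Sum.inl (Sum.inl _) => 0
    | Sum.inl (Sum.inr _), Sum.inr (Sum.inl k) => if k = 0 then 1 else 0
    | Sum.inl (Sum.inr _), Sum.inr (Sum.inr k) => if k = 0 then 1 else 0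
    | Sum.inr (Sum.inl k), Sum.inl (Sum.inr _) => if k = 0 then 1 else 0
    | Sum.inr (Sum.inr k), Sum.inl (Sum.inr _) => if k = 0 then 1 else 0
    | Sum.inr (Sum.inl k), Sum.inr (Sum.inl l) => B1 k l
    | Sum.inr (Sum.inr k), Sum.inr (Sum.inr l) => B2 k l
    | Sum.inr (Sum.inl _), Sum.inr (Sum.inr _) => 0
    | Sum.inr (Sum.inr _), Sum.inr (Sum.inl _) => 0

open scoped Classical in
/-- `π(A)`: the number of positive eigenvalues (with multiplicity) of a real
symmetric (Hermitian) matrix. -/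
noncomputable def posEig {ι : Type*} [Fintype ι] [DecidableEq ι]
    {A : Matrix ι ι ℝ} (hA : A.IsHermitian) : ℕ :=
  (Finset.univ.filter fun i => 0 < hA.eigenvalues i).card

open scoped Classical in
/-- `σ(A)`: the signature, number of positive minus number of negative eigenvalues. -/
noncomputable def sigEig {ι : Type*} [Fintype ι] [DecidableEq ι]
    {A : Matrix ι ι ℝ} (hA : A.IsHermitian) : ℤ :=
  ((Finset.univ.filter fun i => 0 < hA.eigenvalues i).card : ℤ) -
    ((Finset.univ.filter fun i => hA.eigenvalues i < 0).card : ℤ)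


namespace SplitAux

open Matrix Module Submodule

variable {ι : Type*} [Fintype ι] [DecidableEq ι]

/-- quadratic form of a matrix -/
def Qf (A : Matrix ι ι ℝ) (x : ι → ℝ) : ℝ := x ⬝ᵥ (A *ᵥ x)

lemma Qf_diagonal (d : ι → ℝ) (x : ι → ℝ) :
    Qf (Matrix.diagonal d) x = ∑ i, d i * x i ^ 2 := by
  simp only [Qf, dotProduct, mulVec_diagonal]
  exact Finset.sum_congr rfl fun i _ => by ring

lemma Qf_mulVec (A R : Matrix ι ι ℝ) (y : ι → ℝ) :
    Qf A (R *ᵥ y) = Qf (Rᵀ * A * R) y := by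
  rw [Qf, Qf, mulVec_mulVec, dotProduct_mulVec, dotProduct_mulVec, mul_assoc]
  conv_rhs => rw [← vecMul_vecMul, vecMul_transpose]

noncomputable def coordSpan (S : Finset ι) : Submodule ℝ (ι → ℝ) :=
  Submodule.span ℝ (⇑(Pi.basisFun ℝ ι) '' ↑S)

lemma mem_coordSpan {S : Finset ι} {x : ι → ℝ} :
    x ∈ coordSpan S ↔ ∀ j ∉ S, x j = 0 := by
  rw [coordSpan, Basis.mem_span_image]
  constructor
  · intro h j hj
    by_contra hx
    exact hj (h (by simp [Finsupp.mem_support_iff, Pi.basisFun_repr, hx]))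
  · intro h j hj
    simp only [Finset.mem_coe, Finsupp.mem_support_iff, Pi.basisFun_repr] at hj
    by_contra hjS
    exact hj (h j hjS)

lemma finrank_coordSpan (S : Finset ι) : finrank ℝ (coordSpan S) = S.card := by
  classical
  have hli : LinearIndependent ℝ ((↑) : (⇑(Pi.basisFun ℝ ι) '' (S : Set ι)) → (ι → ℝ)) :=
    ((linearIndepOn_id_range_iff (Pi.basisFun ℝ ι).injective).mpr
      (Pi.basisFun ℝ ι).linearIndependent).mono (Set.image_subset_range _ _)
  rw [coordSpan, finrank_span_set_eq_card hli]
  rw [Set.toFinset_image]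
  simp [Finset.card_image_of_injective _ (Pi.basisFun ℝ ι).injective]

open scoped Classical in
noncomputable def posCount (d : ι → ℝ) : ℕ := (Finset.univ.filter fun i => 0 < d i).card

open scoped Classical in
noncomputable def negCount (d : ι → ℝ) : ℕ := (Finset.univ.filter fun i => d i < 0).card

lemma negCount_eq' (d : ι → ℝ) : negCount d = posCount (fun i => -d i) := by
  classical
  unfold negCount posCount
  congr 1
  apply Finset.filter_congr
  intro i _
  simp

lemma posOn_coordSpan (d : ι → ℝ) :
    ∀ x ∈ coordSpan (Finset.univ.filter fun i => 0 < d i), x ≠ 0 →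
      0 < Qf (Matrix.diagonal d) x := by
  classical
  intro x hx hx0
  rw [Qf_diagonal]
  have hmem := mem_coordSpan.1 hx
  obtain ⟨j, hj⟩ := Function.ne_iff.1 hx0
  have hdj : 0 < d j := by
    by_contra hdj
    exact hj (hmem j (by simp [hdj]))
  apply Finset.sum_pos' _ ⟨j, Finset.mem_univ j, mul_pos hdj (sq_pos_of_ne_zero hj)⟩
  intro i _
  by_cases hdi : 0 < d i
  · positivity
  · rw [hmem i (by simp [hdi])]
    simp

lemma nonpos_on_compl (d : ι → ℝ) :
    ∀ x ∈ coordSpan ((Finset.univ.filter fun i => 0 < d i)ᶜ),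
      Qf (Matrix.diagonal d) x ≤ 0 := by
  classical
  intro x hx
  rw [Qf_diagonal]
  have hmem := mem_coordSpan.1 hx
  apply Finset.sum_nonpos
  intro i _
  by_cases hdi : 0 < d i
  · rw [hmem i (by simp [hdi])]
    simp
  · push_neg at hdi
    have : x i ^ 2 ≥ 0 := sq_nonneg _
    nlinarith

lemma finrank_le_posCount (d : ι → ℝ) (W : Submodule ℝ (ι → ℝ))
    (hW : ∀ x ∈ W, x ≠ 0 → 0 < Qf (Matrix.diagonal d) x) :
    finrank ℝ W ≤ posCount d := by
  classical
  by_contra hlt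
  push_neg at hlt
  set U := coordSpan ((Finset.univ.filter fun i => 0 < d i)ᶜ) with hU
  have hrU : finrank ℝ U = Fintype.card ι - posCount d := by
    rw [hU, finrank_coordSpan, Finset.card_compl]
    rfl
  have hple : posCount d ≤ Fintype.card ι := by
    unfold posCount
    exact (Finset.card_filter_le _ _)
  have htop : finrank ℝ ↥(W ⊔ U) ≤ Fintype.card ι := by
    have := Submodule.finrank_le (W ⊔ U)
    simpa [Module.finrank_pi] using this
  have hsum := Submodule.finrank_sup_add_finrank_inf_eq W U
  have hpos : 0 < finrank ℝ ↥(W ⊓ U) := by omega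
  haveI := Module.nontrivial_of_finrank_pos (R := ℝ) hpos
  obtain ⟨⟨x, hxWU⟩, hxne⟩ := exists_ne (0 : ↥(W ⊓ U))
  have hxW : x ∈ W := hxWU.1
  have hxU : x ∈ U := hxWU.2
  have hx0 : x ≠ 0 := by
    intro h
    exact hxne (Subtype.ext h)
  exact absurd (hW x hxW hx0) (not_lt.2 (nonpos_on_compl d x hxU))

lemma diag_congr_symm {d d' : ι → ℝ} {R Rinv : Matrix ι ι ℝ}
    (h1 : R * Rinv = 1)
    (h : Matrix.diagonal d' = Rᵀ * Matrix.diagonal d * R) :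
    Matrix.diagonal d = Rinvᵀ * Matrix.diagonal d' * Rinv := by
  rw [h]
  have : Rinvᵀ * (Rᵀ * Matrix.diagonal d * R) * Rinv
      = (R * Rinv)ᵀ * Matrix.diagonal d * (R * Rinv) := by
    simp only [Matrix.transpose_mul, Matrix.mul_assoc]
  rw [this, h1]
  simp

lemma posCount_le_of_congr {d d' : ι → ℝ} {R Rinv : Matrix ι ι ℝ}
    (h1 : R * Rinv = 1) (h2 : Rinv * R = 1)
    (h : Matrix.diagonal d' = Rᵀ * Matrix.diagonal d * R) :
    posCount d' ≤ posCount d := by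
  classical
  set eq : (ι → ℝ) ≃ₗ[ℝ] (ι → ℝ) := LinearEquiv.ofLinear R.mulVecLin Rinv.mulVecLin
    (by rw [← Matrix.mulVecLin_mul, h1, Matrix.mulVecLin_one])
    (by rw [← Matrix.mulVecLin_mul, h2, Matrix.mulVecLin_one]) with heq
  set W' := coordSpan (Finset.univ.filter fun i => 0 < d' i) with hW'
  have hcard : posCount d' = finrank ℝ W' := by
    rw [hW', finrank_coordSpan]
    rfl
  rw [hcard, ← LinearEquiv.finrank_map_eq eq W']
  apply finrank_le_posCount
  intro x hx hx0
  obtain ⟨y, hy, rfl⟩ := Submodule.mem_map.1 hx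
  have hy0 : y ≠ 0 := by
    intro h0
    rw [h0] at hx0
    simp at hx0
  have hxy : eq.toLinearMap y = R *ᵥ y := rfl
  rw [hxy, Qf_mulVec, ← h]
  exact posOn_coordSpan d' y hy hy0

lemma posCount_congr {d d' : ι → ℝ} {R Rinv : Matrix ι ι ℝ}
    (h1 : R * Rinv = 1) (h2 : Rinv * R = 1)
    (h : Matrix.diagonal d' = Rᵀ * Matrix.diagonal d * R) :
    posCount d' = posCount d :=
  le_antisymm (posCount_le_of_congr h1 h2 h)
    (posCount_le_of_congr h2 h1 (diag_congr_symm h1 h))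

lemma negCount_congr {d d' : ι → ℝ} {R Rinv : Matrix ι ι ℝ}
    (h1 : R * Rinv = 1) (h2 : Rinv * R = 1)
    (h : Matrix.diagonal d' = Rᵀ * Matrix.diagonal d * R) :
    negCount d' = negCount d := by
  have hneg : Matrix.diagonal (fun i => -d' i) = Rᵀ * Matrix.diagonal (fun i => -d i) * R := by
    rw [← Matrix.diagonal_neg, ← Matrix.diagonal_neg, h]
    simp only [Matrix.mul_neg, Matrix.neg_mul]
  rw [negCount_eq', negCount_eq', posCount_congr h1 h2 hneg]

lemma posCount_sum_elim {α β : Type*} [Fintype α] [Fintype β]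
    (f : α → ℝ) (g : β → ℝ) :
    posCount (Sum.elim f g) = posCount f + posCount g := by
  classical
  unfold posCount
  rw [Finset.card_filter, Finset.card_filter, Finset.card_filter, Fintype.sum_sum_type]
  simp [Finset.card_filter, -Finset.sum_boole]
  convert rfl
  all_goals split_ifs with h <;> [exact (if_pos h).symm; exact (if_neg h).symm]

lemma negCount_sum_elim {α β : Type*} [Fintype α] [Fintype β]
    (f : α → ℝ) (g : β → ℝ) :
    negCount (Sum.elim f g) = negCount f + negCount g := by
  classical
  unfold negCount
  rw [Finset.card_filter, Finset.card_filter, Finset.card_filter, Fintype.sum_sum_type]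
  simp [Finset.card_filter, -Finset.sum_boole]
  convert rfl
  all_goals split_ifs with h <;> [exact (if_pos h).symm; exact (if_neg h).symm]

lemma count_two_aux (p : Unit ⊕ Unit → Prop) [DecidablePred p] :
    (Finset.univ.filter p).card
      = (if p (Sum.inl ()) then 1 else 0) + (if p (Sum.inr ()) then 1 else 0) := by
  rw [Finset.card_filter, Fintype.sum_sum_type]
  simp [Finset.filter_singleton, apply_ite Finset.card]

lemma posCount_two {d : Unit ⊕ Unit → ℝ} (hab : d (Sum.inl ()) * d (Sum.inr ()) < 0) :
    posCount d = 1 ∧ negCount d = 1 := by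
  unfold posCount negCount
  rw [count_two_aux, count_two_aux]
  rcases mul_neg_iff.1 hab with ⟨ha, hb⟩ | ⟨ha, hb⟩ <;>
    simp [ha, hb, ha.not_gt, hb.not_gt]

end SplitAux

namespace SplitAux

open Matrix

def A2mat (e : ℝ) : Matrix (Unit ⊕ Unit) (Unit ⊕ Unit) ℝ := fun i j =>
  match i, j with
  | Sum.inl _, Sum.inl _ => 0
  | Sum.inl _, Sum.inr _ => 1
  | Sum.inr _, Sum.inl _ => 1
  | Sum.inr _, Sum.inr _ => e

lemma A2mat_isHermitian (e : ℝ) : (A2mat e).IsHermitian := by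
  rw [Matrix.IsHermitian, Matrix.conjTranspose_eq_transpose_of_trivial]
  ext i j
  rcases i with i | i <;> rcases j with j | j <;>
    simp [Matrix.transpose_apply, A2mat]

def e2 : (Unit ⊕ Unit) ≃ Fin 2 where
  toFun := Sum.elim (fun _ => 0) (fun _ => 1)
  invFun i := if i = 0 then Sum.inl () else Sum.inr ()
  left_inv := by rintro (⟨⟩ | ⟨⟩) <;> simp
  right_inv := by intro i; fin_cases i <;> simp

lemma A2mat_det (e : ℝ) : (A2mat e).det = -1 := by
  rw [← Matrix.det_reindex_self e2 (A2mat e)]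
  have h : Matrix.reindex e2 e2 (A2mat e) = !![0, 1; 1, e] := by
    ext i j
    fin_cases i <;> fin_cases j <;>
      simp [Matrix.reindex_apply, Matrix.submatrix_apply, e2, A2mat]
  rw [h, Matrix.det_fin_two_of]
  ring

def Emat (n m : ℕ) : Matrix (SplitIdx n m) (SplitIdx n m) ℝ := fun i j =>
  match i, j with
  | Sum.inl (Sum.inl _), Sum.inr (Sum.inl k) => if k = 0 then 1 else 0
  | Sum.inl (Sum.inl _), Sum.inr (Sum.inr k) => if k = 0 then 1 else 0
  | _, _ => 0

def Fmat (n m : ℕ) : Matrix (SplitIdx n m) (SplitIdx n m) ℝ := fun i j =>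
  match i, j with
  | Sum.inl (Sum.inr _), Sum.inr (Sum.inl k) => if k = 0 then 1 else 0
  | Sum.inl (Sum.inr _), Sum.inr (Sum.inr k) => if k = 0 then 1 else 0
  | _, _ => 0

def Dmat {n m : ℕ} (e : ℝ) (B1 : Matrix (Fin (n + 1)) (Fin (n + 1)) ℝ)
    (B2 : Matrix (Fin (m + 1)) (Fin (m + 1)) ℝ) :
    Matrix (SplitIdx n m) (SplitIdx n m) ℝ :=
  Matrix.fromBlocks (A2mat e) 0 0 (Matrix.fromBlocks B1 0 0 B2)

variable {n m : ℕ} {e : ℝ} {B1 : Matrix (Fin (n + 1)) (Fin (n + 1)) ℝ}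
  {B2 : Matrix (Fin (m + 1)) (Fin (m + 1)) ℝ}

lemma Emat_sq : Emat n m * Emat n m = 0 := by
  ext i j
  rw [Matrix.mul_apply]
  apply Finset.sum_eq_zero
  intro k _
  rcases i with (⟨⟩ | ⟨⟩) | (i | i) <;> rcases k with (⟨⟩ | ⟨⟩) | (k | k) <;>
    simp [Emat]

lemma Dmat_mul_Emat : Dmat e B1 B2 * Emat n m = Fmat n m := by
  ext i j
  rw [Matrix.mul_apply]
  rw [Finset.sum_eq_single ((Sum.inl (Sum.inl ())) : SplitIdx n m)]
  · rcases i with (⟨⟩ | ⟨⟩) | (i | i) <;> rcases j with (⟨⟩ | ⟨⟩) | (j | j) <;>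
      simp [Dmat, Emat, Fmat, A2mat, Matrix.fromBlocks]
  · intro k _ hk
    rcases k with (⟨⟩ | ⟨⟩) | (k | k)
    · exact absurd rfl hk
    all_goals rcases j with (⟨⟩ | ⟨⟩) | (j | j) <;> simp [Emat]
  · intro h
    exact absurd (Finset.mem_univ _) h

lemma Emat_t_mul_Dmat : (Emat n m)ᵀ * Dmat e B1 B2 = (Fmat n m)ᵀ := by
  ext i j
  rw [Matrix.mul_apply]
  rw [Finset.sum_eq_single ((Sum.inl (Sum.inl ())) : SplitIdx n m)]
  · rcases i with (⟨⟩ | ⟨⟩) | (i | i) <;> rcases j with (⟨⟩ | ⟨⟩) | (j | j) <;>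
      simp [Dmat, Emat, Fmat, A2mat, Matrix.fromBlocks, Matrix.transpose_apply]
  · intro k _ hk
    rcases k with (⟨⟩ | ⟨⟩) | (k | k)
    · exact absurd rfl hk
    all_goals rcases i with (⟨⟩ | ⟨⟩) | (i | i) <;>
      simp [Emat, Matrix.transpose_apply]
  · intro h
    exact absurd (Finset.mem_univ _) h

lemma Emat_t_mul_Fmat : (Emat n m)ᵀ * Fmat n m = 0 := by
  ext i j
  rw [Matrix.mul_apply]
  apply Finset.sum_eq_zero
  intro k _
  rcases k with (⟨⟩ | ⟨⟩) | (k | k) <;> rcases i with (⟨⟩ | ⟨⟩) | (i | i) <;>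
    rcases j with (⟨⟩ | ⟨⟩) | (j | j) <;>
    simp [Emat, Fmat, Matrix.transpose_apply]

lemma splitMat_eq_sum : splitMat e B1 B2 = Dmat e B1 B2 + Fmat n m + (Fmat n m)ᵀ := by
  ext i j
  rcases i with (⟨⟩ | ⟨⟩) | (i | i) <;> rcases j with (⟨⟩ | ⟨⟩) | (j | j) <;>
    simp [splitMat, Dmat, Fmat, A2mat, Matrix.fromBlocks, Matrix.transpose_apply,
      Matrix.add_apply]

lemma splitMat_congr :
    splitMat e B1 B2
      = (1 + Emat n m)ᵀ * Dmat e B1 B2 * (1 + Emat n m) := by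
  have hexp : (1 + Emat n m)ᵀ * Dmat e B1 B2 * (1 + Emat n m)
      = Dmat e B1 B2 + Dmat e B1 B2 * Emat n m + (Emat n m)ᵀ * Dmat e B1 B2
        + (Emat n m)ᵀ * (Dmat e B1 B2 * Emat n m) := by
    rw [Matrix.transpose_add, Matrix.transpose_one]
    noncomm_ring
  rw [hexp, Dmat_mul_Emat, Emat_t_mul_Dmat, Emat_t_mul_Fmat, add_zero, splitMat_eq_sum]

lemma spectral_real {ι : Type*} [Fintype ι] [DecidableEq ι] {M : Matrix ι ι ℝ}
    (hM : M.IsHermitian) :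
    M = (↑hM.eigenvectorUnitary : Matrix ι ι ℝ) * Matrix.diagonal hM.eigenvalues
        * (↑hM.eigenvectorUnitary : Matrix ι ι ℝ)ᵀ := by
  have h := hM.spectral_theorem
  rw [Unitary.conjStarAlgAut_apply, Matrix.star_eq_conjTranspose,
    Matrix.conjTranspose_eq_transpose_of_trivial] at h
  have hd : Matrix.diagonal (RCLike.ofReal ∘ hM.eigenvalues) = Matrix.diagonal hM.eigenvalues := by
    congr 1 <;> simp [RCLike.ofReal_real_eq_id, Function.id_comp]
  rw [hd] at h
  exact h

lemma unit_mul_t {ι : Type*} [Fintype ι] [DecidableEq ι] {M : Matrix ι ι ℝ}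
    (hM : M.IsHermitian) :
    (↑hM.eigenvectorUnitary : Matrix ι ι ℝ) * (↑hM.eigenvectorUnitary : Matrix ι ι ℝ)ᵀ = 1 := by
  have h := Matrix.mem_unitaryGroup_iff.1 hM.eigenvectorUnitary.2
  rwa [Matrix.star_eq_conjTranspose, Matrix.conjTranspose_eq_transpose_of_trivial] at h

lemma t_mul_unit {ι : Type*} [Fintype ι] [DecidableEq ι] {M : Matrix ι ι ℝ}
    (hM : M.IsHermitian) :
    (↑hM.eigenvectorUnitary : Matrix ι ι ℝ)ᵀ * (↑hM.eigenvectorUnitary : Matrix ι ι ℝ) = 1 := by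
  have h := Matrix.mem_unitaryGroup_iff'.1 hM.eigenvectorUnitary.2
  rwa [Matrix.star_eq_conjTranspose, Matrix.conjTranspose_eq_transpose_of_trivial] at h

lemma conj_helper {ι : Type*} [Fintype ι] [DecidableEq ι] {U M D : Matrix ι ι ℝ}
    (hU : Uᵀ * U = 1) (h : M = U * D * Uᵀ) :
    D = Uᵀ * M * U := by
  rw [h]
  have hh : Uᵀ * (U * D * Uᵀ) * U = (Uᵀ * U) * D * (Uᵀ * U) := by noncomm_ring
  rw [hh, hU]
  simp

lemma diag_eig {ι : Type*} [Fintype ι] [DecidableEq ι] {M : Matrix ι ι ℝ}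
    (hM : M.IsHermitian) :
    Matrix.diagonal hM.eigenvalues
      = (↑hM.eigenvectorUnitary : Matrix ι ι ℝ)ᵀ * M * (↑hM.eigenvectorUnitary : Matrix ι ι ℝ) :=
  conj_helper (t_mul_unit hM) (spectral_real hM)

end SplitAux


namespace SplitAux

open Matrix

lemma count_split {n m : ℕ} {e : ℝ} {B1 : Matrix (Fin (n + 1)) (Fin (n + 1)) ℝ}
    {B2 : Matrix (Fin (m + 1)) (Fin (m + 1)) ℝ}
    (h1 : B1.IsHermitian) (h2 : B2.IsHermitian)
    (hc : (splitMat e B1 B2).IsHermitian) :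
    posCount hc.eigenvalues
        = posCount (A2mat_isHermitian e).eigenvalues
          + (posCount h1.eigenvalues + posCount h2.eigenvalues)
      ∧ negCount hc.eigenvalues
        = negCount (A2mat_isHermitian e).eigenvalues
          + (negCount h1.eigenvalues + negCount h2.eigenvalues) := by
  classical
  set VA := (↑(A2mat_isHermitian e).eigenvectorUnitary : Matrix (Unit ⊕ Unit) (Unit ⊕ Unit) ℝ)
    with hVA
  set V1 := (↑h1.eigenvectorUnitary : Matrix (Fin (n + 1)) (Fin (n + 1)) ℝ) with hV1
  set V2 := (↑h2.eigenvectorUnitary : Matrix (Fin (m + 1)) (Fin (m + 1)) ℝ) with hV2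
  set Uc := (↑hc.eigenvectorUnitary : Matrix (SplitIdx n m) (SplitIdx n m) ℝ) with hUc
  have hVA1 : VA * VAᵀ = 1 := by rw [hVA]; exact unit_mul_t _
  have hVA2 : VAᵀ * VA = 1 := by rw [hVA]; exact t_mul_unit _
  have hV11 : V1 * V1ᵀ = 1 := by rw [hV1]; exact unit_mul_t _
  have hV12 : V1ᵀ * V1 = 1 := by rw [hV1]; exact t_mul_unit _
  have hV21 : V2 * V2ᵀ = 1 := by rw [hV2]; exact unit_mul_t _
  have hV22 : V2ᵀ * V2 = 1 := by rw [hV2]; exact t_mul_unit _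
  have hUc1 : Uc * Ucᵀ = 1 := by rw [hUc]; exact unit_mul_t _
  have hUc2 : Ucᵀ * Uc = 1 := by rw [hUc]; exact t_mul_unit _
  set V : Matrix (SplitIdx n m) (SplitIdx n m) ℝ
    := Matrix.fromBlocks VA 0 0 (Matrix.fromBlocks V1 0 0 V2) with hV
  have hVVt : V * Vᵀ = 1 := by
    rw [hV, Matrix.fromBlocks_transpose, Matrix.fromBlocks_transpose,
      Matrix.fromBlocks_multiply, Matrix.fromBlocks_multiply]
    simp [hVA1, hV11, hV21, Matrix.fromBlocks_one]
  have hVtV : Vᵀ * V = 1 := by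
    rw [hV, Matrix.fromBlocks_transpose, Matrix.fromBlocks_transpose,
      Matrix.fromBlocks_multiply, Matrix.fromBlocks_multiply]
    simp [hVA2, hV12, hV22, Matrix.fromBlocks_one]
  set δ : SplitIdx n m → ℝ :=
    Sum.elim (A2mat_isHermitian e).eigenvalues
      (Sum.elim h1.eigenvalues h2.eigenvalues) with hδ
  have hDspec : Dmat e B1 B2 = V * Matrix.diagonal δ * Vᵀ := by
    rw [hδ, ← Matrix.fromBlocks_diagonal, ← Matrix.fromBlocks_diagonal, hV,
      Matrix.fromBlocks_transpose, Matrix.fromBlocks_transpose,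
      Matrix.fromBlocks_multiply, Matrix.fromBlocks_multiply]
    simp only [Matrix.mul_zero, Matrix.zero_mul, add_zero, zero_add,
      Matrix.fromBlocks_multiply, Matrix.transpose_zero]
    rw [hVA, hV1, hV2, ← spectral_real (A2mat_isHermitian e), ← spectral_real h1,
      ← spectral_real h2]
    rfl
  have hEsq := Emat_sq (n := n) (m := m)
  have hP1 : (1 + Emat n m) * (1 - Emat n m) = 1 := by
    have hx : (1 + Emat n m) * (1 - Emat n m) = 1 - Emat n m * Emat n m := by noncomm_ring
    rw [hx, hEsq, sub_zero]
  have hP2 : (1 - Emat n m) * (1 + Emat n m) = 1 := by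
    have hx : (1 - Emat n m) * (1 + Emat n m) = 1 - Emat n m * Emat n m := by noncomm_ring
    rw [hx, hEsq, sub_zero]
  set S := (Vᵀ * (1 + Emat n m)) * Uc with hS
  set Sinv := Ucᵀ * ((1 - Emat n m) * V) with hSinv
  have hsplit : splitMat e B1 B2
      = (Vᵀ * (1 + Emat n m))ᵀ * Matrix.diagonal δ * (Vᵀ * (1 + Emat n m)) := by
    rw [splitMat_congr (e := e) (B1 := B1) (B2 := B2), hDspec,
      Matrix.transpose_mul, Matrix.transpose_transpose]
    noncomm_ring
  have hSd : Matrix.diagonal hc.eigenvalues = Sᵀ * Matrix.diagonal δ * S := by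
    have h0 := diag_eig hc
    rw [← hUc] at h0
    have hr : Sᵀ * Matrix.diagonal δ * S = Ucᵀ * (splitMat e B1 B2) * Uc := by
      rw [hsplit, hS, Matrix.transpose_mul]
      noncomm_ring
    rw [hr]
    exact h0
  have hS1 : S * Sinv = 1 := by
    rw [hS, hSinv]
    have hx : (Vᵀ * (1 + Emat n m)) * Uc * (Ucᵀ * ((1 - Emat n m) * V))
        = Vᵀ * ((1 + Emat n m) * ((Uc * Ucᵀ) * ((1 - Emat n m) * V))) := by noncomm_ring
    rw [hx, hUc1, Matrix.one_mul, ← Matrix.mul_assoc (1 + Emat n m), hP1,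
      Matrix.one_mul, hVtV]
  have hS2 : Sinv * S = 1 := by
    rw [hS, hSinv]
    have hx : Ucᵀ * ((1 - Emat n m) * V) * ((Vᵀ * (1 + Emat n m)) * Uc)
        = Ucᵀ * ((1 - Emat n m) * ((V * Vᵀ) * ((1 + Emat n m) * Uc))) := by noncomm_ring
    rw [hx, hVVt, Matrix.one_mul, ← Matrix.mul_assoc (1 - Emat n m), hP2,
      Matrix.one_mul, hUc2]
  have hpos := posCount_congr hS1 hS2 hSd
  have hneg := negCount_congr hS1 hS2 hSd
  constructor
  · rw [hpos, hδ, posCount_sum_elim, posCount_sum_elim]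
  · rw [hneg, hδ, negCount_sum_elim, negCount_sum_elim]

end SplitAux

/-- For invertible symmetric real matrices `B₁`, `B₂` and the splitting-move
matrix `B_∘`, the number of positive eigenvalues satisfies
`π(B_∘) = 1 + π(B₁) + π(B₂)`, the signature satisfies
`σ(B_∘) = σ(B₁) + σ(B₂)`, and `tr(B_∘) = e + tr(B₁) + tr(B₂)`. -/
theorem splitMat_pos_sig_trace {n m : ℕ} (e : ℝ)
    (B1 : Matrix (Fin (n + 1)) (Fin (n + 1)) ℝ)
    (B2 : Matrix (Fin (m + 1)) (Fin (m + 1)) ℝ)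
    (h1 : B1.IsHermitian) (h2 : B2.IsHermitian)
    (hd1 : B1.det ≠ 0) (hd2 : B2.det ≠ 0)
    (hc : (splitMat e B1 B2).IsHermitian) :
    posEig hc = 1 + posEig h1 + posEig h2 ∧
      sigEig hc = sigEig h1 + sigEig h2 ∧
      (splitMat e B1 B2).trace = e + B1.trace + B2.trace := by
  classical
  obtain ⟨hposs, hnegs⟩ := SplitAux.count_split h1 h2 hc
  have hdetA2 : ((SplitAux.A2mat_isHermitian e).eigenvalues (Sum.inl ()))
      * ((SplitAux.A2mat_isHermitian e).eigenvalues (Sum.inr ())) < 0 := by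
    have hdet := (SplitAux.A2mat_isHermitian e).det_eq_prod_eigenvalues
    rw [SplitAux.A2mat_det, Fintype.prod_sum_type] at hdet
    simp [RCLike.ofReal_real_eq_id] at hdet
    linarith [hdet.symm.le]
  obtain ⟨hA2pos, hA2neg⟩ := SplitAux.posCount_two hdetA2
  have e0 : posEig hc = SplitAux.posCount hc.eigenvalues := rfl
  have e1 : posEig h1 = SplitAux.posCount h1.eigenvalues := rfl
  have e2 : posEig h2 = SplitAux.posCount h2.eigenvalues := rfl
  have f0 : sigEig hc = (SplitAux.posCount hc.eigenvalues : ℤ)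
      - SplitAux.negCount hc.eigenvalues := rfl
  have f1 : sigEig h1 = (SplitAux.posCount h1.eigenvalues : ℤ)
      - SplitAux.negCount h1.eigenvalues := rfl
  have f2 : sigEig h2 = (SplitAux.posCount h2.eigenvalues : ℤ)
      - SplitAux.negCount h2.eigenvalues := rfl
  refine ⟨?_, ?_, ?_⟩
  · rw [e0, e1, e2, hposs, hA2pos]
    omega
  · rw [f0, f1, f2, hposs, hnegs, hA2pos, hA2neg]
    push_cast
    ring
  · simp [Matrix.trace, Matrix.diag, splitMat, Fintype.sum_sum_type]
    ring
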